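/- Let l ≥ 1 and 2 ≤ t ≤ l + 1 be integers. For distinct nonzero vectors a, b of (ZMod 2)^m, let E_{l,t}(a,b) denote the number of sequences a = γ₀, γ₁, …, γ_l = b of pairwise distinct nonzero vectors of (ZMod 2)^m whose span has dimension t over ZMod 2. Then E_{l,t}(a,b) does not depend on the choice of a and b: for any two pairs (a,b) and (a',b') of distinct nonzero vectors, E_{l,t}(a,b) = E_{l,t}(a',b'). -/

import Mathlib

/-- `countE m l t a b` is the number of sequences `a = γ₀, γ₁, …, γ_l = b` of pairwise
distinct nonzero vectors of `(ZMod 2)^m` whose span has dimension `t` over `ZMod 2`. -/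
noncomputable def countE (m l t : ℕ) (a b : Fin m → ZMod 2) : ℕ :=
  Set.ncard {γ : Fin (l + 1) → (Fin m → ZMod 2) |
    γ 0 = a ∧ γ (Fin.last l) = b ∧ Function.Injective γ ∧ (∀ i, γ i ≠ 0) ∧
    Module.finrank (ZMod 2) (Submodule.span (ZMod 2) (Set.range γ)) = t}

/-- Two distinct nonzero vectors over `ZMod 2` are linearly independent. -/
lemma pair_li {m : ℕ} {a b : Fin m → ZMod 2} (ha : a ≠ 0) (hb : b ≠ 0) (hab : a ≠ b) :
    LinearIndependent (ZMod 2) ![a, b] := by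
  rw [LinearIndependent.pair_iff]
  intro s t hst
  have key : ∀ x y : ZMod 2, x + y = 0 → x = y := by decide
  rcases (show ∀ x : ZMod 2, x = 0 ∨ x = 1 by decide) s with rfl | rfl <;>
    rcases (show ∀ x : ZMod 2, x = 0 ∨ x = 1 by decide) t with rfl | rfl <;> simp_all
  exact hab (funext fun i => key _ _ (congrFun hst i))

/-- There is a linear automorphism sending one independent pair to another. -/
lemma exists_equiv {m : ℕ} {a b a' b' : Fin m → ZMod 2}
    (ha : a ≠ 0) (hb : b ≠ 0) (hab : a ≠ b)
    (ha' : a' ≠ 0) (hb' : b' ≠ 0) (hab' : a' ≠ b') :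
    ∃ e : (Fin m → ZMod 2) ≃ₗ[ZMod 2] (Fin m → ZMod 2), e a = a' ∧ e b = b' := by
  have hli := pair_li ha hb hab
  have hli' := pair_li ha' hb' hab'
  set U : Submodule (ZMod 2) (Fin m → ZMod 2) := Submodule.span (ZMod 2) (Set.range ![a, b])
  set U' : Submodule (ZMod 2) (Fin m → ZMod 2) := Submodule.span (ZMod 2) (Set.range ![a', b'])
  obtain ⟨W, hW⟩ := Submodule.exists_isCompl U
  obtain ⟨W', hW'⟩ := Submodule.exists_isCompl U'
  have hUr : Module.finrank (ZMod 2) U = 2 := by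
    rw [Module.finrank_eq_card_basis (Module.Basis.span hli)]; simp
  have hU'r : Module.finrank (ZMod 2) U' = 2 := by
    rw [Module.finrank_eq_card_basis (Module.Basis.span hli')]; simp
  have h1 := Submodule.finrank_add_eq_of_isCompl hW
  have h2 := Submodule.finrank_add_eq_of_isCompl hW'
  have hWW' : Module.finrank (ZMod 2) W = Module.finrank (ZMod 2) W' := by omega
  let eU : U ≃ₗ[ZMod 2] U' := (Module.Basis.span hli).equiv (Module.Basis.span hli') (Equiv.refl _)
  let eW : W ≃ₗ[ZMod 2] W' := LinearEquiv.ofFinrankEq _ _ hWW'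
  let e : (Fin m → ZMod 2) ≃ₗ[ZMod 2] (Fin m → ZMod 2) :=
    (Submodule.prodEquivOfIsCompl U W hW).symm ≪≫ₗ (eU.prodCongr eW) ≪≫ₗ
      (Submodule.prodEquivOfIsCompl U' W' hW')
  have key : ∀ (i : Fin 2), e (![a, b] i) = ![a', b'] i := by
    intro i
    have hmem : ![a, b] i ∈ U := Submodule.subset_span ⟨i, rfl⟩
    have hsymm : (Submodule.prodEquivOfIsCompl U W hW).symm (![a, b] i)
        = (⟨![a, b] i, hmem⟩, 0) := by
      rw [LinearEquiv.symm_apply_eq]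
      simp [Submodule.coe_prodEquivOfIsCompl']
    have hBU : (⟨![a, b] i, hmem⟩ : U) = Module.Basis.span hli i :=
      (Module.Basis.span_apply hli i).symm
    simp only [e, LinearEquiv.trans_apply, hsymm, hBU]
    have : eU (Module.Basis.span hli i) = Module.Basis.span hli' i := by
      simp only [eU, Module.Basis.equiv_apply, Equiv.refl_apply]
    simp only [LinearEquiv.prodCongr_apply, this, map_zero]
    have := Module.Basis.span_apply hli' i
    simp [Submodule.coe_prodEquivOfIsCompl', -Module.Basis.span_apply]
    exact congrArg Subtype.val this
  exact ⟨e, key 0, key 1⟩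

lemma mem_map {m l t : ℕ} {a b a' b' : Fin m → ZMod 2}
    (e : (Fin m → ZMod 2) ≃ₗ[ZMod 2] (Fin m → ZMod 2)) (hea : e a = a') (heb : e b = b')
    {γ : Fin (l + 1) → (Fin m → ZMod 2)}
    (hγ : γ ∈ {γ : Fin (l + 1) → (Fin m → ZMod 2) |
      γ 0 = a ∧ γ (Fin.last l) = b ∧ Function.Injective γ ∧ (∀ i, γ i ≠ 0) ∧
      Module.finrank (ZMod 2) (Submodule.span (ZMod 2) (Set.range γ)) = t}) :
    (fun i => e (γ i)) ∈ {γ : Fin (l + 1) → (Fin m → ZMod 2) |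
      γ 0 = a' ∧ γ (Fin.last l) = b' ∧ Function.Injective γ ∧ (∀ i, γ i ≠ 0) ∧
      Module.finrank (ZMod 2) (Submodule.span (ZMod 2) (Set.range γ)) = t} := by
  obtain ⟨h0, hlast, hinj, hnz, hrank⟩ := hγ
  refine ⟨by simp [h0, hea], by simp [hlast, heb], e.injective.comp hinj, fun i hi => hnz i ?_, ?_⟩
  · exact e.injective (by simpa using hi)
  · have : Set.range (fun i => e (γ i)) = e '' Set.range γ := by
      rw [← Set.range_comp]; rfl
    rw [this, ← LinearEquiv.coe_coe, ← Submodule.map_span, ← hrank]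
    exact LinearEquiv.finrank_map_eq e _

/-- For `l ≥ 1` and `2 ≤ t ≤ l + 1`, the count `E_{l,t}(a, b)` does not depend on the
choice of the pair of distinct nonzero vectors `(a, b)`. -/
theorem countE_independent_of_endpoints (m : ℕ) (l t : ℕ)
    (hl : 1 ≤ l) (ht2 : 2 ≤ t) (ht : t ≤ l + 1)
    (a b a' b' : Fin m → ZMod 2)
    (ha : a ≠ 0) (hb : b ≠ 0) (hab : a ≠ b)
    (ha' : a' ≠ 0) (hb' : b' ≠ 0) (hab' : a' ≠ b') :
    countE m l t a b = countE m l t a' b' := by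
  obtain ⟨e, hea, heb⟩ := exists_equiv ha hb hab ha' hb' hab'
  unfold countE
  have himg : (fun γ : Fin (l + 1) → (Fin m → ZMod 2) => fun i => e (γ i)) ''
      {γ : Fin (l + 1) → (Fin m → ZMod 2) |
        γ 0 = a ∧ γ (Fin.last l) = b ∧ Function.Injective γ ∧ (∀ i, γ i ≠ 0) ∧
        Module.finrank (ZMod 2) (Submodule.span (ZMod 2) (Set.range γ)) = t}
      = {γ : Fin (l + 1) → (Fin m → ZMod 2) |
        γ 0 = a' ∧ γ (Fin.last l) = b' ∧ Function.Injective γ ∧ (∀ i, γ i ≠ 0) ∧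
        Module.finrank (ZMod 2) (Submodule.span (ZMod 2) (Set.range γ)) = t} := by
    ext γ'
    constructor
    · rintro ⟨γ, hγ, rfl⟩
      exact mem_map e hea heb hγ
    · intro hγ'
      refine ⟨fun i => e.symm (γ' i), ?_, ?_⟩
      · have hea' : e.symm a' = a := by rw [← hea, e.symm_apply_apply]
        have heb' : e.symm b' = b := by rw [← heb, e.symm_apply_apply]
        exact mem_map e.symm hea' heb' hγ'
      · funext i; simp
  rw [← himg]
  exact (Set.ncard_image_of_injective _ (fun γ₁ γ₂ h => funext fun i =>
    e.injective (congrFun h i))).symm
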